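/- Let G be a Gauss diagram that can be transformed by a sequence of n crossing changes into a Gauss diagram G' whose writhe polynomial vanishes, W_{G'}(t) = 0. Then ∑_{k ∈ ℤ∖{0}} |J_k(G)| ≤ 2n. -/

import Mathlib

open scoped Classical

/-- A Gauss diagram with `n` chords: the `2n` marked points live on the cyclic group
`ZMod (2*n)` (the oriented circle); each chord `i` is the ordered pair
`(tail i, head i)` of marked points and carries a sign (writhe) `sign i ∈ {+1, -1}`;
all `2n` endpoints are distinct. -/
structure GaussDiagram (n : ℕ) where
  tail : Fin n → ZMod (2 * n)
  head : Fin n → ZMod (2 * n)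
  sign : Fin n → ℤ
  sign_mem : ∀ i, sign i = 1 ∨ sign i = -1
  endpoints_inj : Function.Injective
    (fun p : Fin n × Bool => if p.2 then head p.1 else tail p.1)

namespace GaussDiagram

variable {n : ℕ}

/-- `x` lies on the open arc running in the circle's orientation from `a` to `b`. -/
def arcMem (a b x : ZMod (2 * n)) : Prop :=
  0 < (x - a).val ∧ (x - a).val < (b - a).val

/-- `x` lies on the open oriented arc from the tail to the head of chord `i`. -/
def inArc (G : GaussDiagram n) (i : Fin n) (x : ZMod (2 * n)) : Prop :=
  arcMem (G.tail i) (G.head i) x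

/-- Chords `i` and `j` are linked: exactly one endpoint of `j` lies on the open
oriented arc from the tail to the head of `i`. -/
def linked (G : GaussDiagram n) (i j : Fin n) : Prop :=
  Xor' (G.inArc i (G.tail j)) (G.inArc i (G.head j))

/-- Chord `j` crosses chord `i` from right to left. -/
def crossesRL (G : GaussDiagram n) (i j : Fin n) : Prop :=
  G.linked i j ∧ G.inArc i (G.head j)

/-- Chord `j` crosses chord `i` from left to right. -/
def crossesLR (G : GaussDiagram n) (i j : Fin n) : Prop :=
  G.linked i j ∧ G.inArc i (G.tail j)

/-- The index of the chord `i`: `Ind(i) = r₊ − r₋ − l₊ + l₋`. -/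
noncomputable def ind (G : GaussDiagram n) (i : Fin n) : ℤ :=
  ((Finset.univ.filter fun j => G.crossesRL i j ∧ G.sign j = 1).card : ℤ)
    - ((Finset.univ.filter fun j => G.crossesRL i j ∧ G.sign j = -1).card : ℤ)
    - ((Finset.univ.filter fun j => G.crossesLR i j ∧ G.sign j = 1).card : ℤ)
    + ((Finset.univ.filter fun j => G.crossesLR i j ∧ G.sign j = -1).card : ℤ)

/-- The `k`-th writhe `J_k(G)`: the number of positive chords of index `k` minus the
number of negative chords of index `k`. -/
noncomputable def J (G : GaussDiagram n) (k : ℤ) : ℤ :=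
  ((Finset.univ.filter fun i => G.ind i = k ∧ G.sign i = 1).card : ℤ)
    - ((Finset.univ.filter fun i => G.ind i = k ∧ G.sign i = -1).card : ℤ)

/-- The writhe polynomial `W_G(t) = ∑_{Ind(c) ≠ 0} w(c) t^{Ind(c)} = ∑_{k ≠ 0} J_k(G) t^k`. -/
noncomputable def writhePoly (G : GaussDiagram n) : LaurentPolynomial ℤ :=
  ∑ i ∈ Finset.univ.filter (fun i => G.ind i ≠ 0),
    LaurentPolynomial.C (G.sign i) * LaurentPolynomial.T (G.ind i)

/-- The odd writhe `J(G) = ∑_{c ∈ Odd(G)} w(c)`. -/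
noncomputable def oddWrithe (G : GaussDiagram n) : ℤ :=
  ∑ i ∈ Finset.univ.filter (fun i => Odd (G.ind i)), G.sign i

/-- `G'` is obtained from `G` by a crossing change at the chord `c`: the tail and head
of `c` are interchanged and its sign is negated, all other chords being unchanged. -/
def IsCrossingChangeAt (G G' : GaussDiagram n) (c : Fin n) : Prop :=
  G'.tail c = G.head c ∧ G'.head c = G.tail c ∧ G'.sign c = -G.sign c ∧
    ∀ j : Fin n, j ≠ c →
      G'.tail j = G.tail j ∧ G'.head j = G.head j ∧ G'.sign j = G.sign j

/-- `G'` is obtained from `G` by a crossing change (at some chord). -/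
def IsCrossingChange (G G' : GaussDiagram n) : Prop :=
  ∃ c, IsCrossingChangeAt G G' c

/-- `G'` is obtained from `G` by a sequence of `m` crossing changes. -/
def ChangedBy (m : ℕ) (G G' : GaussDiagram n) : Prop :=
  ∃ f : ℕ → GaussDiagram n, f 0 = G ∧ f m = G' ∧
    ∀ i < m, IsCrossingChange (f i) (f (i + 1))

end GaussDiagram

namespace GaussDiagramAux

open Finset

/-- Key ZMod fact: for distinct points a,b,x, x lies on the arc a→b iff it does not
lie on the arc b→a. -/
lemma arc_flip {m : ℕ} [NeZero m] {a b x : ZMod m} (hab : a ≠ b) (hxa : x ≠ a)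
    (hxb : x ≠ b) :
    (0 < (x - a).val ∧ (x - a).val < (b - a).val) ↔
      ¬(0 < (x - b).val ∧ (x - b).val < (a - b).val) := by
  set u := (x - a).val with hu
  set v := (b - a).val with hv
  have hm : 0 < m := Nat.pos_of_ne_zero (NeZero.ne m)
  have hu0 : u ≠ 0 := by
    simp only [hu, Ne, ZMod.val_eq_zero, sub_eq_zero]; exact hxa
  have hv0 : v ≠ 0 := by
    simp only [hv, Ne, ZMod.val_eq_zero, sub_eq_zero]; exact fun h => hab h.symm
  have hum : u < m := ZMod.val_lt _
  have hvm : v < m := ZMod.val_lt _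
  have huv : u ≠ v := by
    intro h
    apply hxb
    have := ZMod.val_injective m (hu.symm.trans (h.trans hv))
    linear_combination this
  have hab' : (a - b) = -(b - a) := by ring
  have hvab : (a - b).val = m - v := by
    rw [hab', ZMod.neg_val]
    rw [if_neg]
    simp only [Ne, sub_eq_zero]
    exact fun h => hab h.symm
  have hxb' : (x - b) = (x - a) + (-(b - a)) := by ring
  have hnegv : (-(b - a)).val = m - v := by
    rw [ZMod.neg_val, if_neg]
    simp only [Ne, sub_eq_zero]
    exact fun h => hab h.symm
  have hxbv : (x - b).val = (u + (m - v)) % m := by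
    rw [hxb', ZMod.val_add, hnegv]
  rcases lt_or_gt_of_ne huv with h | h
  · -- u < v : arc a→b holds, arc b→a fails
    have : (x - b).val = u + (m - v) := by
      rw [hxbv, Nat.mod_eq_of_lt (by omega)]
    rw [hvab]
    constructor
    · intro _ hc
      omega
    · intro _
      exact ⟨Nat.pos_of_ne_zero hu0, h⟩
  · -- u > v : arc b→a holds, arc a→b fails
    have : (x - b).val = u - v := by
      have : u + (m - v) = (u - v) + m := by omega
      rw [hxbv, this, Nat.add_mod_right, Nat.mod_eq_of_lt (by omega)]
    rw [hvab]
    constructor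
    · intro hc
      omega
    · intro hc
      exfalso
      exact hc ⟨by omega, by omega⟩

end GaussDiagramAux

namespace GaussDiagram

open Finset

variable {n : ℕ}

lemma tail_ne_head (G : GaussDiagram n) (i j : Fin n) : G.tail i ≠ G.head j := by
  intro h
  have := G.endpoints_inj (a₁ := (i, false)) (a₂ := (j, true)) (by simpa using h)
  simp at this

lemma tail_inj (G : GaussDiagram n) {i j : Fin n} (h : G.tail i = G.tail j) : i = j := by
  have := G.endpoints_inj (a₁ := (i, false)) (a₂ := (j, false)) (by simpa using h)
  simpa using this

lemma head_inj (G : GaussDiagram n) {i j : Fin n} (h : G.head i = G.head j) : i = j := by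
  have := G.endpoints_inj (a₁ := (i, true)) (a₂ := (j, true)) (by simpa using h)
  simpa using this

/-- contribution of chord `j` to the index of chord `i`. -/
noncomputable def contrib (G : GaussDiagram n) (i j : Fin n) : ℤ :=
  (if G.crossesRL i j then G.sign j else 0) - (if G.crossesLR i j then G.sign j else 0)

lemma sum_sign_eq (G : GaussDiagram n) (P : Fin n → Prop) :
    ∑ j ∈ univ.filter P, G.sign j
      = ((univ.filter fun j => P j ∧ G.sign j = 1).card : ℤ)
        - ((univ.filter fun j => P j ∧ G.sign j = -1).card : ℤ) := by
  rw [← Finset.sum_filter_add_sum_filter_not (univ.filter P) (fun j => G.sign j = 1)]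
  rw [Finset.filter_filter, Finset.filter_filter]
  have h1 : ∑ j ∈ univ.filter fun j => P j ∧ G.sign j = 1, G.sign j
      = ((univ.filter fun j => P j ∧ G.sign j = 1).card : ℤ) := by
    rw [Finset.sum_congr rfl (fun j hj => (Finset.mem_filter.1 hj).2.2)]
    simp [mul_comm]
  have h2 : (univ.filter fun j => P j ∧ ¬G.sign j = 1)
      = (univ.filter fun j => P j ∧ G.sign j = -1) := by
    apply Finset.filter_congr
    intro j _
    rcases G.sign_mem j with h | h <;> simp [h]
  have h3 : ∑ j ∈ univ.filter fun j => P j ∧ G.sign j = -1, G.sign j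
      = -((univ.filter fun j => P j ∧ G.sign j = -1).card : ℤ) := by
    rw [Finset.sum_congr rfl (fun j hj => (Finset.mem_filter.1 hj).2.2)]
    simp
  rw [h1, h2, h3]
  ring

lemma ind_eq_sum (G : GaussDiagram n) (i : Fin n) :
    G.ind i = ∑ j, G.contrib i j := by
  unfold ind contrib
  rw [Finset.sum_sub_distrib]
  rw [← Finset.sum_filter, ← Finset.sum_filter, sum_sign_eq, sum_sign_eq]
  ring

lemma J_eq_sum (G : GaussDiagram n) (k : ℤ) :
    G.J k = ∑ j, (if G.ind j = k then G.sign j else 0) := by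
  unfold J
  rw [← Finset.sum_filter]
  convert (sum_sign_eq G (fun a => G.ind a = k)).symm using 2 <;> congr!

lemma not_linked_self (G : GaussDiagram n) (i : Fin n) : ¬ G.linked i i := by
  unfold linked inArc arcMem
  simp [Xor']

lemma contrib_self (G : GaussDiagram n) (i : Fin n) : G.contrib i i = 0 := by
  unfold contrib crossesRL crossesLR
  simp [G.not_linked_self i]


section Change

variable {G G' : GaussDiagram n} {c : Fin n}

lemma inArc_of_ne (hc : IsCrossingChangeAt G G' c) {i : Fin n} (hi : i ≠ c) (x : ZMod (2*n)) :
    G'.inArc i x ↔ G.inArc i x := by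
  unfold inArc
  rw [(hc.2.2.2 i hi).1, (hc.2.2.2 i hi).2.1]

lemma inArc_self_flip (hc : IsCrossingChangeAt G G' c) (x : ZMod (2*n))
    (hx1 : x ≠ G.tail c) (hx2 : x ≠ G.head c) :
    G'.inArc c x ↔ ¬ G.inArc c x := by
  haveI : NeZero (2*n) := ⟨by have := c.pos; omega⟩
  unfold inArc arcMem
  rw [hc.1, hc.2.1]
  exact GaussDiagramAux.arc_flip (fun h => G.tail_ne_head c c h.symm) hx2 hx1

lemma contrib_change_ne (hc : IsCrossingChangeAt G G' c) {i : Fin n} (hi : i ≠ c)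
    (j : Fin n) : G'.contrib i j = G.contrib i j := by
  by_cases hj : j = c
  · subst hj
    have h1 : ∀ x, G'.inArc i x ↔ G.inArc i x := inArc_of_ne hc hi
    unfold contrib crossesRL crossesLR linked
    rw [hc.1, hc.2.1, hc.2.2.1]
    simp only [h1]
    by_cases hA : G.inArc i (G.tail j) <;> by_cases hB : G.inArc i (G.head j) <;>
      simp [Xor', hA, hB]
  · have hj' := hc.2.2.2 j hj
    have hi' := hc.2.2.2 i hi
    unfold contrib crossesRL crossesLR linked inArc
    rw [hj'.1, hj'.2.1, hj'.2.2, hi'.1, hi'.2.1]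

lemma contrib_change_eq (hc : IsCrossingChangeAt G G' c) (j : Fin n) :
    G'.contrib c j = - G.contrib c j := by
  by_cases hj : j = c
  · subst hj
    rw [contrib_self, contrib_self]
    ring
  · have hj' := hc.2.2.2 j hj
    have hT : G'.inArc c (G.tail j) ↔ ¬ G.inArc c (G.tail j) :=
      inArc_self_flip hc _ (fun h => hj (G.tail_inj h)) (fun h => G.tail_ne_head j c h)
    have hH : G'.inArc c (G.head j) ↔ ¬ G.inArc c (G.head j) :=
      inArc_self_flip hc _ (fun h => G.tail_ne_head c j h.symm) (fun h => hj (G.head_inj h))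
    unfold contrib crossesRL crossesLR linked
    rw [hj'.1, hj'.2.1, hj'.2.2]
    simp only [hT, hH]
    by_cases hA : G.inArc c (G.tail j) <;> by_cases hB : G.inArc c (G.head j) <;>
      simp [Xor', hA, hB]

lemma ind_change_ne (hc : IsCrossingChangeAt G G' c) {i : Fin n} (hi : i ≠ c) :
    G'.ind i = G.ind i := by
  rw [ind_eq_sum, ind_eq_sum]
  exact Finset.sum_congr rfl fun j _ => contrib_change_ne hc hi j

lemma ind_change_eq (hc : IsCrossingChangeAt G G' c) : G'.ind c = - G.ind c := by
  rw [ind_eq_sum, ind_eq_sum, ← Finset.sum_neg_distrib]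
  exact Finset.sum_congr rfl fun j _ => contrib_change_eq hc j

lemma J_change (hc : IsCrossingChangeAt G G' c) (k : ℤ) :
    G.J k = G'.J k +
      ((if G.ind c = k then G.sign c else 0) - (if -G.ind c = k then -G.sign c else 0)) := by
  rw [J_eq_sum, J_eq_sum]
  rw [← Finset.add_sum_erase _ _ (Finset.mem_univ c),
    ← Finset.add_sum_erase _ _ (Finset.mem_univ c)]
  have hsum : ∑ j ∈ Finset.univ.erase c, (if G'.ind j = k then G'.sign j else 0)
      = ∑ j ∈ Finset.univ.erase c, (if G.ind j = k then G.sign j else 0) := by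
    refine Finset.sum_congr rfl fun j hj => ?_
    have hjc : j ≠ c := (Finset.mem_erase.1 hj).1
    rw [ind_change_ne hc hjc, (hc.2.2.2 j hjc).2.2]
  rw [hsum, ind_change_eq hc, hc.2.2.1]
  ring

end Change

lemma J_eq_zero_of_forall_ne (G : GaussDiagram n) {k : ℤ} (h : ∀ i, G.ind i ≠ k) :
    G.J k = 0 := by
  rw [J_eq_sum]
  exact Finset.sum_eq_zero fun i _ => if_neg (h i)

lemma finsum_J_eq (G : GaussDiagram n) (T : Finset ℤ) (h0 : (0:ℤ) ∉ T)
    (hT : ∀ k, k ≠ 0 → G.J k ≠ 0 → k ∈ T) :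
    (∑ᶠ (k : ℤ) (_ : k ≠ 0), |G.J k|) = ∑ k ∈ T, |G.J k| := by
  apply finsum_cond_eq_sum_of_cond_iff
  intro x hx
  constructor
  · exact fun hx0 => hT x hx0 (fun h => hx (by rw [h, abs_zero]))
  · exact fun hxT heq => h0 (heq ▸ hxT)

lemma mem_image_of_J_ne (G : GaussDiagram n) {k : ℤ} (h : G.J k ≠ 0) :
    k ∈ Finset.univ.image G.ind := by
  by_contra hk
  exact h (J_eq_zero_of_forall_ne G fun i hi =>
    hk (Finset.mem_image.2 ⟨i, Finset.mem_univ i, hi⟩))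

lemma step_le {G G' : GaussDiagram n} (h : IsCrossingChange G G') :
    (∑ᶠ (k : ℤ) (_ : k ≠ 0), |G.J k|) ≤ (∑ᶠ (k : ℤ) (_ : k ≠ 0), |G'.J k|) + 2 := by
  obtain ⟨c, hc⟩ := h
  set T : Finset ℤ := ((Finset.univ.image G.ind) ∪ (Finset.univ.image G'.ind)).erase 0 with hTdef
  rw [finsum_J_eq G T (Finset.notMem_erase _ _) (fun k hk0 hJ =>
      Finset.mem_erase.2 ⟨hk0, Finset.mem_union_left _ (mem_image_of_J_ne G hJ)⟩),
    finsum_J_eq G' T (Finset.notMem_erase _ _) (fun k hk0 hJ =>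
      Finset.mem_erase.2 ⟨hk0, Finset.mem_union_right _ (mem_image_of_J_ne G' hJ)⟩)]
  have key : ∀ k ∈ T, |G.J k| ≤ |G'.J k| +
      ((if G.ind c = k then (1:ℤ) else 0) + (if -G.ind c = k then (1:ℤ) else 0)) := by
    intro k _
    rw [J_change hc k]
    have h1 : |(if G.ind c = k then G.sign c else 0)| ≤ (if G.ind c = k then (1:ℤ) else 0) := by
      rcases G.sign_mem c with h | h <;> split <;> simp [h]
    have h2 : |(if -G.ind c = k then -G.sign c else 0)| ≤ (if -G.ind c = k then (1:ℤ) else 0) := by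
      rcases G.sign_mem c with h | h <;> split <;> simp [h]
    calc |G'.J k + ((if G.ind c = k then G.sign c else 0)
            - (if -G.ind c = k then -G.sign c else 0))|
        ≤ |G'.J k| + |(if G.ind c = k then G.sign c else 0)
            - (if -G.ind c = k then -G.sign c else 0)| := abs_add_le _ _
      _ ≤ |G'.J k| + (|(if G.ind c = k then G.sign c else 0)|
            + |(if -G.ind c = k then -G.sign c else 0)|) := by
            have := abs_sub (if G.ind c = k then G.sign c else 0)
              (if -G.ind c = k then -G.sign c else 0)
            linarith
      _ ≤ _ := by linarith
  have hsum := Finset.sum_le_sum key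
  rw [Finset.sum_add_distrib, Finset.sum_add_distrib] at hsum
  have e1 : ∑ k ∈ T, (if G.ind c = k then (1:ℤ) else 0) ≤ 1 := by
    rw [Finset.sum_ite_eq]
    split <;> norm_num
  have e2 : ∑ k ∈ T, (if -G.ind c = k then (1:ℤ) else 0) ≤ 1 := by
    rw [Finset.sum_ite_eq]
    split <;> norm_num
  linarith

lemma changedBy_le {G G' : GaussDiagram n} {m : ℕ} (h : ChangedBy m G G') :
    (∑ᶠ (k : ℤ) (_ : k ≠ 0), |G.J k|) ≤ (∑ᶠ (k : ℤ) (_ : k ≠ 0), |G'.J k|) + 2 * (m : ℤ) := by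
  induction m generalizing G with
  | zero =>
    obtain ⟨f, h0, h1, _⟩ := h
    rw [← h0, h1]
    simp
  | succ m ih =>
    obtain ⟨f, h0, hm, hstep⟩ := h
    have h1 : IsCrossingChange G (f 1) := h0 ▸ hstep 0 (Nat.succ_pos m)
    have h2 : ChangedBy m (f 1) G' :=
      ⟨fun i => f (i + 1), rfl, hm, fun i hi => hstep (i + 1) (by omega)⟩
    have := ih h2
    have := step_le h1
    push_cast
    linarith

lemma J_eq_zero_of_writhePoly_eq_zero (G : GaussDiagram n) (h : G.writhePoly = 0)
    {k : ℤ} (hk : k ≠ 0) : G.J k = 0 := by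
  have h1 : G.writhePoly.coeff k = 0 := by rw [h]; rfl
  have h2 : G.writhePoly.coeff k
      = ∑ i ∈ Finset.univ.filter (fun i => G.ind i ≠ 0),
          (if G.ind i = k then G.sign i else 0) := by
    unfold writhePoly
    simp only [← LaurentPolynomial.single_eq_C_mul_T]
    rw [AddMonoidAlgebra.coeff_sum, Finsupp.finset_sum_apply]
    exact Finset.sum_congr rfl fun i _ => by rw [AddMonoidAlgebra.coeff_single]; exact Finsupp.single_apply
  have h3 : ∑ i ∈ Finset.univ.filter (fun i => G.ind i ≠ 0),
      (if G.ind i = k then G.sign i else 0)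
      = ∑ i, (if G.ind i = k then G.sign i else 0) := by
    apply Finset.sum_subset (Finset.filter_subset _ _)
    intro i _ hi
    have : G.ind i = 0 := by
      by_contra hne
      exact hi (Finset.mem_filter.2 ⟨Finset.mem_univ i, hne⟩)
    rw [if_neg (by rw [this]; exact fun he => hk he.symm)]
  rw [J_eq_sum, ← h3, ← h2, h1]

end GaussDiagram
/-- if `G` can be transformed by a sequence of `m` crossing changes into a
Gauss diagram `G'` with `W_{G'}(t) = 0`, then `∑_{k ≠ 0} |J_k(G)| ≤ 2m`. -/
theorem sum_abs_J_le_of_changedBy {n : ℕ} (m : ℕ) (G G' : GaussDiagram n)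
    (h : GaussDiagram.ChangedBy m G G') (h0 : G'.writhePoly = 0) :
    ∑ᶠ (k : ℤ) (_ : k ≠ 0), |G.J k| ≤ 2 * (m : ℤ) := by
  have h1 : ∀ k : ℤ, k ≠ 0 → G'.J k = 0 := fun k hk =>
    GaussDiagram.J_eq_zero_of_writhePoly_eq_zero G' h0 hk
  have h2 : (∑ᶠ (k : ℤ) (_ : k ≠ 0), |G'.J k|) = 0 := by
    rw [GaussDiagram.finsum_J_eq G' ∅ (by simp) (fun k hk hJ => absurd (h1 k hk) hJ)]
    simp
  have h3 := GaussDiagram.changedBy_le h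
  rw [h2] at h3
  linarith
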